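/- Let Z(J) = ∫_ℝ e^{-x²/2 + Jx} dx. For every natural number n, the function Z is n times differentiable and its n-th derivative at J = 0 equals ∫_ℝ xⁿ e^{-x²/2} dx (differentiation under the integral sign for the Gaussian generating function). -/

import Mathlib

open MeasureTheory Real Filter

lemma gauss_exp_integrable (d : ℝ) :
    Integrable (fun x : ℝ => Real.exp (-x ^ 2 / 2 + d * x)) := by
  have h : Integrable (fun x : ℝ => Real.exp (-(1 / 2) * (x - d) ^ 2)) :=
    (integrable_exp_neg_mul_sq (by norm_num : (0:ℝ) < 1 / 2)).comp_sub_right d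
  have h2 := h.const_mul (Real.exp (d ^ 2 / 2))
  refine h2.congr (Eventually.of_forall fun x => ?_)
  show Real.exp (d ^ 2 / 2) * Real.exp (-(1 / 2) * (x - d) ^ 2) = _
  rw [← Real.exp_add]
  exact congrArg Real.exp (by ring)

lemma gauss_pow_integrable (m : ℕ) (d : ℝ) :
    Integrable (fun x : ℝ => |x| ^ m * Real.exp (-x ^ 2 / 2 + d * x)) := by
  have hb : Integrable (fun x : ℝ =>
      (Nat.factorial m : ℝ) * (Real.exp (-x ^ 2 / 2 + (d + 1) * x) +
        Real.exp (-x ^ 2 / 2 + (d - 1) * x))) :=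
    ((gauss_exp_integrable (d + 1)).add (gauss_exp_integrable (d - 1))).const_mul _
  refine hb.mono' ?_ (Eventually.of_forall fun x => ?_)
  · exact (Continuous.mul (by fun_prop) (by fun_prop)).aestronglyMeasurable
  · have h1 : |x| ^ m ≤ (Nat.factorial m : ℝ) * Real.exp |x| := by
      have := Real.pow_div_factorial_le_exp (x := |x|) (abs_nonneg x) m
      rw [div_le_iff₀ (by positivity)] at this
      linarith [this]
    have h2 : Real.exp |x| ≤ Real.exp x + Real.exp (-x) := by
      rcases abs_cases x with ⟨h, _⟩ | ⟨h, _⟩ <;> rw [h] <;>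
        [linarith [Real.exp_pos (-x)]; linarith [Real.exp_pos x]]
    have hxp : (0:ℝ) < Real.exp (-x ^ 2 / 2 + d * x) := Real.exp_pos _
    rw [Real.norm_eq_abs, abs_mul, abs_of_nonneg hxp.le, abs_pow, abs_abs]
    calc |x| ^ m * Real.exp (-x ^ 2 / 2 + d * x)
        ≤ (Nat.factorial m : ℝ) * (Real.exp x + Real.exp (-x)) * Real.exp (-x ^ 2 / 2 + d * x) := by
          apply mul_le_mul_of_nonneg_right (h1.trans ?_) hxp.le
          exact mul_le_mul_of_nonneg_left h2 (by positivity)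
      _ = (Nat.factorial m : ℝ) * (Real.exp (-x ^ 2 / 2 + (d + 1) * x) +
            Real.exp (-x ^ 2 / 2 + (d - 1) * x)) := by
          rw [mul_assoc, add_mul, ← Real.exp_add, ← Real.exp_add]
          ring_nf

lemma gauss_hasDerivAt (m : ℕ) (J : ℝ) :
    HasDerivAt (fun J : ℝ => ∫ x : ℝ, x ^ m * Real.exp (-x ^ 2 / 2 + J * x))
      (∫ x : ℝ, x ^ (m + 1) * Real.exp (-x ^ 2 / 2 + J * x)) J := by
  have hbound : Integrable (fun x : ℝ =>
      |x| ^ (m + 1) * (Real.exp (-x ^ 2 / 2 + (|J| + 1) * x) +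
        Real.exp (-x ^ 2 / 2 + (-(|J| + 1)) * x))) := by
    have := (gauss_pow_integrable (m + 1) (|J| + 1)).add
      (gauss_pow_integrable (m + 1) (-(|J| + 1)))
    refine this.congr (Eventually.of_forall fun x => ?_)
    simp [mul_add]
  have := hasDerivAt_integral_of_dominated_loc_of_deriv_le (μ := volume) (x₀ := J)
    (F := fun J x => x ^ m * Real.exp (-x ^ 2 / 2 + J * x))
    (F' := fun J x => x ^ (m + 1) * Real.exp (-x ^ 2 / 2 + J * x))
    (bound := fun x => |x| ^ (m + 1) * (Real.exp (-x ^ 2 / 2 + (|J| + 1) * x) +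
        Real.exp (-x ^ 2 / 2 + (-(|J| + 1)) * x)))
    (Metric.ball_mem_nhds J one_pos)
    (Eventually.of_forall fun J' =>
      (Continuous.mul (by fun_prop) (by fun_prop)).aestronglyMeasurable)
    ?_ ?_ ?_ hbound ?_
  · exact this.2
  · -- Integrable (F J)
    have := gauss_pow_integrable m J
    refine (this.mono' (Continuous.aestronglyMeasurable (by fun_prop))
      (Eventually.of_forall fun x => ?_))
    rw [Real.norm_eq_abs, abs_mul, abs_pow, abs_of_nonneg (Real.exp_pos _).le]
  · exact (Continuous.mul (by fun_prop) (by fun_prop)).aestronglyMeasurable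
  · -- bound
    refine Eventually.of_forall fun x => fun J' hJ' => ?_
    have hJ'le : |J'| ≤ |J| + 1 := by
      have := mem_ball_iff_norm.mp hJ'
      rw [Real.norm_eq_abs] at this
      calc |J'| ≤ |J' - J| + |J| := by
            simpa using abs_add_le (J' - J) J
        _ ≤ |J| + 1 := by linarith
    have hkey : Real.exp (-x ^ 2 / 2 + J' * x) ≤
        Real.exp (-x ^ 2 / 2 + (|J| + 1) * x) + Real.exp (-x ^ 2 / 2 + (-(|J| + 1)) * x) := by
      have hx : J' * x ≤ (|J| + 1) * |x| := by
        calc J' * x ≤ |J' * x| := le_abs_self _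
          _ = |J'| * |x| := abs_mul _ _
          _ ≤ (|J| + 1) * |x| := mul_le_mul_of_nonneg_right hJ'le (abs_nonneg x)
      rcases abs_cases x with ⟨h, _⟩ | ⟨h, _⟩
      · rw [h] at hx
        have := Real.exp_le_exp.mpr (by linarith : -x ^ 2 / 2 + J' * x ≤ -x ^ 2 / 2 + (|J| + 1) * x)
        linarith [Real.exp_pos (-x ^ 2 / 2 + (-(|J| + 1)) * x)]
      · rw [h] at hx
        have hx' : -x ^ 2 / 2 + J' * x ≤ -x ^ 2 / 2 + (-(|J| + 1)) * x := by nlinarith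
        have := Real.exp_le_exp.mpr hx'
        linarith [Real.exp_pos (-x ^ 2 / 2 + (|J| + 1) * x)]
    rw [Real.norm_eq_abs, abs_mul, abs_pow, abs_of_nonneg (Real.exp_pos _).le]
    exact mul_le_mul_of_nonneg_left hkey (by positivity)
  · -- differentiability in J
    refine Eventually.of_forall fun x => fun J' _ => ?_
    have h : HasDerivAt (fun J : ℝ => -x ^ 2 / 2 + J * x) x J' := by
      simpa using (hasDerivAt_mul_const x).const_add (-x ^ 2 / 2)
    have := (h.exp).const_mul (x ^ m)
    refine this.congr_deriv ?_
    rw [pow_succ]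
    ring

theorem gaussian_generating_function_deriv (n : ℕ)
    (Z : ℝ → ℝ) (hZ : ∀ J : ℝ, Z J = ∫ x : ℝ, Real.exp (-x ^ 2 / 2 + J * x)) :
    (∀ k : ℕ, k < n → Differentiable ℝ (iteratedDeriv k Z)) ∧
      iteratedDeriv n Z 0 = ∫ x : ℝ, x ^ n * Real.exp (-x ^ 2 / 2) := by
  have key : ∀ m : ℕ, iteratedDeriv m Z =
      fun J => ∫ x : ℝ, x ^ m * Real.exp (-x ^ 2 / 2 + J * x) := by
    intro m
    induction m with
    | zero =>
      funext J
      simpa [iteratedDeriv_zero] using hZ J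
    | succ k ih =>
      funext J
      rw [iteratedDeriv_succ, ih]
      exact (gauss_hasDerivAt k J).deriv
  constructor
  · intro k _
    rw [key k]
    exact fun J => (gauss_hasDerivAt k J).differentiableAt
  · rw [key n]
    norm_num
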